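/- Under the echo condition and stationarity of y(0), the second-order term (coefficient of t²) of the short-time expansion of the decoherence function vanishes. -/

import Mathlib

open Matrix Finset

/-- The decoherence function of a qubit under an `N`-pulse dynamical decoupling
sequence with normalized intervals `a`, rate matrix `Γ`, field values `w`, and
initial distribution `y0`. -/
noncomputable def decoherenceFn {N M : ℕ} (Γ : Matrix (Fin M) (Fin M) ℝ)
    (w : Fin M → ℝ) (y0 : Fin M → ℝ) (a : Fin (N + 1) → ℝ) (t : ℝ) : ℂ :=
  ∑ j, (((List.ofFn fun n : Fin (N + 1) =>
      NormedSpace.exp ((a n * t) •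
        ((Γ.map (Complex.ofReal)) +
          ((-1 : ℝ) ^ (n : ℕ)) • (Complex.I • Matrix.diagonal fun j => (w j : ℂ))))).reverse.prod).mulVec
      (fun j => (y0 j : ℂ))) j

section Aux


open NormedSpace

attribute [local instance] Matrix.linftyOpNormedRing Matrix.linftyOpNormedAlgebra

variable {M : ℕ}

/-- product of exponentials -/
noncomputable def expProd (l : List (Matrix (Fin M) (Fin M) ℂ)) (t : ℝ) :
    Matrix (Fin M) (Fin M) ℂ :=
  (l.map fun A => exp (t • A)).prod

/-- first derivative of `expProd` -/
noncomputable def expProdD : List (Matrix (Fin M) (Fin M) ℂ) → ℝ → Matrix (Fin M) (Fin M) ℂ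
  | [], _ => 0
  | A :: l, t => A * exp (t • A) * expProd l t + exp (t • A) * expProdD l t

/-- second derivative of `expProd` at `0` -/
noncomputable def expProdD2 : List (Matrix (Fin M) (Fin M) ℂ) → Matrix (Fin M) (Fin M) ℂ
  | [] => 0
  | A :: l => A * A + A * l.sum + (A * l.sum + expProdD2 l)

lemma expProd_nil (t : ℝ) : expProd ([] : List (Matrix (Fin M) (Fin M) ℂ)) t = 1 := rfl

lemma expProd_cons (A : Matrix (Fin M) (Fin M) ℂ) (l : List (Matrix (Fin M) (Fin M) ℂ)) (t : ℝ) :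
    expProd (A :: l) t = exp (t • A) * expProd l t := rfl

lemma expProd_zero (l : List (Matrix (Fin M) (Fin M) ℂ)) : expProd l 0 = 1 := by
  induction l with
  | nil => rfl
  | cons A l ih => rw [expProd_cons, ih, zero_smul, exp_zero, one_mul]

lemma hasDerivAt_expProd (l : List (Matrix (Fin M) (Fin M) ℂ)) (t : ℝ) :
    HasDerivAt (fun u => expProd l u) (expProdD l t) t := by
  induction l generalizing t with
  | nil => exact (hasDerivAt_const t (1 : Matrix (Fin M) (Fin M) ℂ))
  | cons A l ih =>
    have h := (hasDerivAt_exp_smul_const' A t).mul (ih t)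
    exact h

lemma expProdD_zero (l : List (Matrix (Fin M) (Fin M) ℂ)) : expProdD l 0 = l.sum := by
  induction l with
  | nil => rfl
  | cons A l ih =>
    simp [expProdD, expProd_zero, ih, exp_zero]

lemma hasDerivAt_expProdD (l : List (Matrix (Fin M) (Fin M) ℂ)) :
    HasDerivAt (fun u => expProdD l u) (expProdD2 l) 0 := by
  induction l with
  | nil => exact (hasDerivAt_const (0:ℝ) (0 : Matrix (Fin M) (Fin M) ℂ))
  | cons A l ih =>
    have h1 : HasDerivAt (fun u : ℝ => A * exp (u • A) * expProd l u)
        (A * (A * exp ((0:ℝ) • A)) * expProd l 0 +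
          A * exp ((0:ℝ) • A) * expProdD l 0) 0 := by
      have := (((hasDerivAt_exp_smul_const' A (0:ℝ)).const_mul A).mul (hasDerivAt_expProd l 0))
      exact this
    have h2 : HasDerivAt (fun u : ℝ => exp (u • A) * expProdD l u)
        (A * exp ((0:ℝ) • A) * expProdD l 0 + exp ((0:ℝ) • A) * expProdD2 l) 0 :=
      (hasDerivAt_exp_smul_const' A (0:ℝ)).mul ih
    have h := h1.add h2
    have e : A * (A * exp ((0:ℝ) • A)) * expProd l 0 + A * exp ((0:ℝ) • A) * expProdD l 0 +
        (A * exp ((0:ℝ) • A) * expProdD l 0 + exp ((0:ℝ) • A) * expProdD2 l)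
        = expProdD2 (A :: l) := by
      simp [expProd_zero, expProdD_zero, exp_zero, expProdD2, mul_one, one_mul, mul_assoc]
    rw [e] at h
    exact h



/-- the linear functional `X ↦ ∑ⱼ (X y)ⱼ` -/
noncomputable def phiLM (y : Fin M → ℂ) : Matrix (Fin M) (Fin M) ℂ →ₗ[ℝ] ℂ where
  toFun X := ∑ j, X.mulVec y j
  map_add' X Y := by simp [Matrix.add_mulVec, Finset.sum_add_distrib]
  map_smul' r X := by simp [Matrix.smul_mulVec, Finset.smul_sum]

noncomputable def phiCLM (y : Fin M → ℂ) : Matrix (Fin M) (Fin M) ℂ →L[ℝ] ℂ :=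
  (phiLM y).toContinuousLinearMap

lemma phiCLM_apply (y : Fin M → ℂ) (X : Matrix (Fin M) (Fin M) ℂ) :
    phiCLM y X = ∑ j, X.mulVec y j := rfl

lemma hasDerivAt_phi_expProd (y : Fin M → ℂ) (l : List (Matrix (Fin M) (Fin M) ℂ)) (t : ℝ) :
    HasDerivAt (fun u => phiCLM y (expProd l u)) (phiCLM y (expProdD l t)) t := by
  exact
    ((phiCLM y).hasFDerivAt.comp_hasDerivAt t (hasDerivAt_expProd l t))

lemma iteratedDeriv_two_phi (y : Fin M → ℂ) (l : List (Matrix (Fin M) (Fin M) ℂ)) :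
    iteratedDeriv 2 (fun t => phiCLM y (expProd l t)) 0 = phiCLM y (expProdD2 l) := by
  rw [show (2:ℕ) = 1 + 1 from rfl, iteratedDeriv_succ, iteratedDeriv_one]
  have h1 : deriv (fun t => phiCLM y (expProd l t)) = fun t => phiCLM y (expProdD l t) :=
    funext fun t => (hasDerivAt_phi_expProd y l t).deriv
  rw [h1]
  have h2 : HasDerivAt (fun u => phiCLM y (expProdD l u)) (phiCLM y (expProdD2 l)) 0 := by
    exact
      ((phiCLM y).hasFDerivAt.comp_hasDerivAt 0 (hasDerivAt_expProdD l))
  exact h2.deriv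


lemma phi_leftG (Γ : Matrix (Fin M) (Fin M) ℝ) (hΓ : ∀ k, ∑ j, Γ j k = 0)
    (y : Fin M → ℂ) (Y : Matrix (Fin M) (Fin M) ℂ) :
    phiCLM y (Γ.map Complex.ofReal * Y) = 0 := by
  simp only [phiCLM_apply, Matrix.mulVec, dotProduct, Matrix.mul_apply, Matrix.map_apply]
  rw [Finset.sum_comm]
  refine Finset.sum_eq_zero fun k _ => ?_
  rw [← Finset.sum_mul]
  rw [Finset.sum_comm]
  have : ∀ m : Fin M, ∑ j, (Γ j m : ℂ) * Y m k = 0 := by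
    intro m
    rw [← Finset.sum_mul, ← Complex.ofReal_sum, hΓ m]
    simp
  simp [this]

lemma phi_rightG (Γ : Matrix (Fin M) (Fin M) ℝ) (y0 : Fin M → ℝ)
    (hstat : Γ.mulVec y0 = 0) (Y : Matrix (Fin M) (Fin M) ℂ) :
    phiCLM (fun j => (y0 j : ℂ)) (Y * Γ.map Complex.ofReal) = 0 := by
  have hz : (Γ.map Complex.ofReal).mulVec (fun j => (y0 j : ℂ)) = 0 := by
    funext j
    have h0 : (Γ.mulVec y0) j = 0 := by rw [hstat]; rfl
    simp only [Matrix.mulVec, dotProduct, Matrix.map_apply, Pi.zero_apply]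
    norm_cast
    try simpa [Matrix.mulVec, dotProduct] using h0
  simp only [phiCLM_apply, ← Matrix.mulVec_mulVec, hz]
  simp [Matrix.mulVec_zero]

lemma phi_KK (w : Fin M → ℝ) (y0 : Fin M → ℝ) :
    phiCLM (fun j => (y0 j : ℂ))
      ((Complex.I • Matrix.diagonal fun j => (w j : ℂ)) *
        (Complex.I • Matrix.diagonal fun j => (w j : ℂ)))
      = -((∑ j, w j ^ 2 * y0 j : ℝ) : ℂ) := by
  have h : (Complex.I • Matrix.diagonal fun j => (w j : ℂ)) *
      (Complex.I • Matrix.diagonal fun j => (w j : ℂ)) =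
      (-1 : ℂ) • Matrix.diagonal (fun j => (w j : ℂ) * (w j : ℂ)) := by
    rw [Matrix.smul_mul, Matrix.mul_smul, smul_smul, Complex.I_mul_I,
      Matrix.diagonal_mul_diagonal]
  rw [h]
  simp only [phiCLM_apply, Matrix.smul_mulVec, Pi.smul_apply, Matrix.mulVec_diagonal,
    smul_eq_mul, neg_one_mul]
  push_cast
  rw [Finset.sum_neg_distrib]
  congr 1
  refine Finset.sum_congr rfl fun j _ => ?_
  ring


variable {N : ℕ}

noncomputable def matA (Γ : Matrix (Fin M) (Fin M) ℝ) (w : Fin M → ℝ)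
    (a : Fin (N + 1) → ℝ) (n : Fin (N + 1)) : Matrix (Fin M) (Fin M) ℂ :=
  a n • ((Γ.map Complex.ofReal) +
    ((-1 : ℝ) ^ (n : ℕ)) • (Complex.I • Matrix.diagonal fun j => (w j : ℂ)))

lemma mul_expand (r s r' s' : ℝ) (X Y X' Y' : Matrix (Fin M) (Fin M) ℂ) :
    (r • X + s • Y) * (r' • X' + s' • Y') =
      (r * r') • (X * X') + (r * s') • (X * Y') + (s * r') • (Y * X') + (s * s') • (Y * Y') := by
  simp only [add_mul, mul_add, smul_mul_assoc, mul_smul_comm, smul_smul, smul_add]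
  module

lemma phi_pair (Γ : Matrix (Fin M) (Fin M) ℝ) (hΓ : ∀ k, ∑ j, Γ j k = 0)
    (w : Fin M → ℝ) (y0 : Fin M → ℝ) (hstat : Γ.mulVec y0 = 0)
    (a : Fin (N + 1) → ℝ) (m n : Fin (N + 1)) :
    phiCLM (fun j => (y0 j : ℂ)) (matA Γ w a m * matA Γ w a n)
      = -(((((-1:ℝ)^(m:ℕ) * a m) * ((-1:ℝ)^(n:ℕ) * a n)) : ℝ) : ℂ) *
        ((∑ j, w j ^ 2 * y0 j : ℝ) : ℂ) := by
  have hA : ∀ p : Fin (N + 1), matA Γ w a p =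
      a p • (Γ.map Complex.ofReal) +
        ((-1:ℝ)^(p:ℕ) * a p) • (Complex.I • Matrix.diagonal fun j => (w j : ℂ)) := by
    intro p
    rw [matA, smul_add, smul_smul, mul_comm]
  rw [hA, hA, mul_expand]
  simp only [map_add, _root_.map_smul]
  rw [phi_leftG Γ hΓ, phi_leftG Γ hΓ, phi_rightG Γ y0 hstat, phi_KK]
  simp only [smul_zero, zero_add, add_zero, Complex.real_smul]
  push_cast
  ring

lemma phi_sum (Γ : Matrix (Fin M) (Fin M) ℝ) (hΓ : ∀ k, ∑ j, Γ j k = 0)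
    (w : Fin M → ℝ) (y0 : Fin M → ℝ) (hstat : Γ.mulVec y0 = 0)
    (a : Fin (N + 1) → ℝ) (m : Fin (N + 1)) (l : List (Fin (N + 1))) :
    phiCLM (fun j => (y0 j : ℂ)) (matA Γ w a m * (l.map (matA Γ w a)).sum)
      = -((((-1:ℝ)^(m:ℕ) * a m) *
          (l.map fun n : Fin (N + 1) => (-1:ℝ)^(n:ℕ) * a n).sum : ℝ) : ℂ) *
        ((∑ j, w j ^ 2 * y0 j : ℝ) : ℂ) := by
  induction l with
  | nil => simp
  | cons n l ih =>
    simp only [List.map_cons, List.sum_cons, mul_add, map_add, ih,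
      phi_pair Γ hΓ w y0 hstat a m n]
    push_cast
    ring

lemma phi_E2 (Γ : Matrix (Fin M) (Fin M) ℝ) (hΓ : ∀ k, ∑ j, Γ j k = 0)
    (w : Fin M → ℝ) (y0 : Fin M → ℝ) (hstat : Γ.mulVec y0 = 0)
    (a : Fin (N + 1) → ℝ) (l : List (Fin (N + 1))) :
    phiCLM (fun j => (y0 j : ℂ)) (expProdD2 (l.map (matA Γ w a)))
      = -((((l.map fun n : Fin (N + 1) => (-1:ℝ)^(n:ℕ) * a n).sum ^ 2 : ℝ)) : ℂ) *
        ((∑ j, w j ^ 2 * y0 j : ℝ) : ℂ) := by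
  induction l with
  | nil => simp [expProdD2]
  | cons n l ih =>
    simp only [List.map_cons, expProdD2, map_add, ih,
      phi_pair Γ hΓ w y0 hstat a n n, phi_sum Γ hΓ w y0 hstat a n l, List.sum_cons]
    push_cast
    ring

theorem second_order_term_vanishes {N M : ℕ}
    (Γ : Matrix (Fin M) (Fin M) ℝ) (hΓ : ∀ k, ∑ j, Γ j k = 0)
    (w : Fin M → ℝ)
    (y0 : Fin M → ℝ) (hy0 : ∀ j, 0 ≤ y0 j) (hy0sum : ∑ j, y0 j = 1)
    (hstat : Γ.mulVec y0 = 0)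
    (a : Fin (N + 1) → ℝ) (ha : ∀ n, 0 ≤ a n) (hasum : ∑ n, a n = 1)
    (hecho : ∑ n : Fin (N + 1), (-1 : ℝ) ^ (n : ℕ) * a n = 0) :
    iteratedDeriv 2 (fun t => decoherenceFn Γ w y0 a t) 0 = 0 := by
  have key : (fun t => decoherenceFn Γ w y0 a t)
      = fun t => phiCLM (fun j => (y0 j : ℂ))
          (expProd ((List.ofFn (matA Γ w a)).reverse) t) := by
    funext t
    have hfac : ∀ n : Fin (N + 1),
        NormedSpace.exp ((a n * t) • ((Γ.map Complex.ofReal) +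
          ((-1 : ℝ) ^ (n : ℕ)) • (Complex.I • Matrix.diagonal fun j => (w j : ℂ))))
        = NormedSpace.exp (t • matA Γ w a n) := by
      intro n
      congr 1
      simp only [matA, smul_smul]
      rw [mul_comm]
    simp only [decoherenceFn, phiCLM_apply, expProd, List.map_reverse, List.map_ofFn,
      Function.comp, hfac]
    rfl
  rw [key, iteratedDeriv_two_phi]
  have hrev : (List.ofFn (matA Γ w a)).reverse
      = ((List.ofFn (fun n : Fin (N + 1) => n)).reverse).map (matA Γ w a) := by
    rw [List.map_reverse, List.map_ofFn]
    congr
  rw [hrev, phi_E2 Γ hΓ w y0 hstat a]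
  have hv : (((List.ofFn (fun n : Fin (N + 1) => n)).reverse).map
      fun n : Fin (N + 1) => (-1:ℝ)^(n:ℕ) * a n).sum = 0 := by
    rw [List.map_reverse, List.sum_reverse, List.map_ofFn, List.sum_ofFn]
    simpa using hecho
  rw [hv]
  simp

end Aux
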